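/- Let δ ∈ (0,1). There exists a constant c > 0, depending only on δ, such that for every R ≥ 0 and every continuously differentiable function f : [R,∞) → ℝ with ∫_R^∞ f(r)² e^{2(δ−1)r} dr < ∞ and ∫_R^∞ f′(r)² e^{2δr} dr < ∞, the limit f_∞ = lim_{r→∞} f(r) exists and satisfies |f_∞|² ≤ c·( e^{2(1−δ)R} ∫_R^∞ f(r)² e^{2(δ−1)r} dr + e^{−2δR} ∫_R^∞ f′(r)² e^{2δr} dr ). -/

import Mathlib

open MeasureTheory Filter Set

lemma key_amgm {I b c : ℝ} (hI : 0 ≤ I) (hb : 0 ≤ b) (hc : 0 < c)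
    (h : ∀ ε : ℝ, 0 < ε → I ≤ ε * b / 2 + ε⁻¹ * c / 2) : I ^ 2 ≤ b * c := by
  rcases eq_or_lt_of_le hb with hb0 | hb0
  · have hI0 : I ≤ 0 := by
      by_contra h'
      push_neg at h'
      have h2 := h (c / I) (by positivity)
      rw [← hb0] at h2
      have : (c / I)⁻¹ * c = I := by field_simp
      rw [this] at h2
      nlinarith
    have : I = 0 := le_antisymm hI0 hI
    nlinarith
  · set ε := Real.sqrt (c / b) with hεdef
    have hε : 0 < ε := Real.sqrt_pos.2 (by positivity)
    have hε2 : ε ^ 2 = c / b := Real.sq_sqrt (by positivity)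
    have hεb : ε * b * (ε * b) = b * c := by
      have : ε ^ 2 * b = c := by rw [hε2]; field_simp
      nlinarith
    have hinv : ε⁻¹ * c = ε * b := by
      have : ε * (ε * b) = c := by nlinarith
      field_simp
      nlinarith
    have h2 := h ε hε
    rw [hinv] at h2
    have : I ≤ ε * b := by linarith
    nlinarith

lemma exp_int_Ioi {b : ℝ} (hb : 0 < b) (r : ℝ) :
    ∫ s in Ioi r, Real.exp (-b * s) = Real.exp (-b * r) / b := by
  have hderiv : ∀ s ∈ Ici r, HasDerivAt (fun s => -Real.exp (-b * s) / b)
      (Real.exp (-b * s)) s := by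
    intro s _
    have h1 : HasDerivAt (fun s : ℝ => -b * s) (-b) s := by
      simpa using (hasDerivAt_id s).const_mul (-b)
    have h2 := (Real.hasDerivAt_exp (-b * s)).comp s h1
    have h3 := (h2.div_const b).neg
    have h4 : HasDerivAt (fun s : ℝ => -Real.exp (-b * s) / b)
        (-(Real.exp (-b * s) * -b / b)) s := by
      simpa [Function.comp, neg_div, Pi.neg_def] using h3
    convert h4 using 1
    rw [mul_neg, neg_div, neg_neg, mul_div_assoc, div_self hb.ne', mul_one]
  have htend : Tendsto (fun s => -Real.exp (-b * s) / b) atTop (nhds 0) := by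
    have : Tendsto (fun s : ℝ => -b * s) atTop atBot :=
      (tendsto_const_mul_atBot_of_neg (by linarith)).2 tendsto_id
    have := (Real.tendsto_exp_atBot.comp this).neg.div_const b
    simpa using this
  have hint : IntegrableOn (fun s => Real.exp (-b * s)) (Ioi r) :=
    exp_neg_integrableOn_Ioi r hb
  have := integral_Ioi_of_hasDerivAt_of_tendsto' hderiv hint htend
  rw [this]
  field_simp
  ring


set_option maxHeartbeats 1000000 in
/-- Boundary-value estimate of the paper's Lemma 2.4: for `0 < δ < 1` there is a constant
`c = c(δ) > 0` such that any `C¹` function `f` on `[R,∞)` (`R ≥ 0`) with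
`∫ f² e^{2(δ−1)r} < ∞` and `∫ f′² e^{2δr} < ∞` has a limit `f_∞` at infinity with
`|f_∞|² ≤ c (e^{2(1−δ)R} ∫ f² e^{2(δ−1)r} + e^{−2δR} ∫ f′² e^{2δr})`. -/
theorem boundary_value_estimate (δ : ℝ) (hδ : δ ∈ Set.Ioo (0 : ℝ) 1) :
    ∃ c : ℝ, 0 < c ∧ ∀ R : ℝ, 0 ≤ R → ∀ f f' : ℝ → ℝ,
      (∀ r ∈ Set.Ici R, HasDerivAt f (f' r) r) →
      ContinuousOn f' (Set.Ici R) →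
      IntegrableOn (fun r => f r ^ 2 * Real.exp (2 * (δ - 1) * r)) (Set.Ioi R) →
      IntegrableOn (fun r => f' r ^ 2 * Real.exp (2 * δ * r)) (Set.Ioi R) →
      ∃ finf : ℝ, Tendsto f atTop (nhds finf) ∧
        finf ^ 2 ≤ c *
          (Real.exp (2 * (1 - δ) * R) *
              (∫ r in Set.Ioi R, f r ^ 2 * Real.exp (2 * (δ - 1) * r)) +
            Real.exp (-2 * δ * R) *
              (∫ r in Set.Ioi R, f' r ^ 2 * Real.exp (2 * δ * r))) := by
  obtain ⟨hδ0, hδ1⟩ := hδ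
  refine ⟨2 * Real.exp 2 + 1 / δ, by positivity, ?_⟩
  intro R hR f f' hderiv hcont hA hB
  set A := ∫ r in Set.Ioi R, f r ^ 2 * Real.exp (2 * (δ - 1) * r) with hAdef
  set B := ∫ r in Set.Ioi R, f' r ^ 2 * Real.exp (2 * δ * r) with hBdef
  have hA0 : 0 ≤ A := setIntegral_nonneg measurableSet_Ioi (fun r _ => by positivity)
  have hB0 : 0 ≤ B := setIntegral_nonneg measurableSet_Ioi (fun r _ => by positivity)
  -- pointwise AM-GM bound on |f'|
  have hptwise : ∀ ε : ℝ, 0 < ε → ∀ s : ℝ,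
      |f' s| ≤ ε * (f' s ^ 2 * Real.exp (2 * δ * s)) / 2 + ε⁻¹ * Real.exp (-(2 * δ) * s) / 2 := by
    intro ε hε s
    have e1 : Real.exp (2 * δ * s) = Real.exp (δ * s) ^ 2 := by
      rw [← Real.exp_nat_mul]; ring_nf
    have e2 : Real.exp (-(2 * δ) * s) = Real.exp (-(δ * s)) ^ 2 := by
      rw [← Real.exp_nat_mul]; ring_nf
    have e3 : Real.exp (δ * s) * Real.exp (-(δ * s)) = 1 := by
      rw [← Real.exp_add]; simp
    have h1 : Real.sqrt ε ^ 2 = ε := Real.sq_sqrt hε.le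
    have h2 : Real.sqrt ε⁻¹ ^ 2 = ε⁻¹ := Real.sq_sqrt (by positivity)
    have h3 : Real.sqrt ε * Real.sqrt ε⁻¹ = 1 := by
      rw [← Real.sqrt_mul hε.le]
      rw [mul_inv_cancel₀ hε.ne', Real.sqrt_one]
    have h4 : f' s ^ 2 = |f' s| ^ 2 := (sq_abs _).symm
    set a := |f' s| with ha
    set p := Real.exp (δ * s) with hp
    set q := Real.exp (-(δ * s)) with hq
    have hxy := two_mul_le_add_sq (Real.sqrt ε * (a * p)) (Real.sqrt ε⁻¹ * q)
    have hx2 : (Real.sqrt ε * (a * p)) ^ 2 = ε * (a ^ 2 * p ^ 2) := by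
      rw [mul_pow, h1, mul_pow]
    have hy2 : (Real.sqrt ε⁻¹ * q) ^ 2 = ε⁻¹ * q ^ 2 := by rw [mul_pow, h2]
    have hxyval : (Real.sqrt ε * (a * p)) * (Real.sqrt ε⁻¹ * q) = a := by
      calc (Real.sqrt ε * (a * p)) * (Real.sqrt ε⁻¹ * q)
          = (Real.sqrt ε * Real.sqrt ε⁻¹) * (a * (p * q)) := by ring
        _ = a := by rw [h3, e3]; ring
    rw [e1, e2, h4]
    nlinarith [hxy, hx2, hy2, hxyval]
  -- measurability of f' on tails
  have hmeas : ∀ r, R ≤ r → AEStronglyMeasurable f' (volume.restrict (Set.Ioi r)) := by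
    intro r hr
    exact (hcont.mono (fun x hx => le_trans hr (le_of_lt hx))).aestronglyMeasurable
      measurableSet_Ioi
  have h2δ : (0:ℝ) < 2 * δ := by linarith
  -- integrability of f' on tails, and integral bound
  have hBtail : ∀ r, R ≤ r →
      IntegrableOn (fun s => f' s ^ 2 * Real.exp (2 * δ * s)) (Set.Ioi r) :=
    fun r hr => hB.mono_set (Set.Ioi_subset_Ioi hr)
  have hexpint : ∀ r : ℝ, IntegrableOn (fun s => Real.exp (-(2 * δ) * s)) (Set.Ioi r) :=
    fun r => exp_neg_integrableOn_Ioi r h2δ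
  have hf'int : ∀ r, R ≤ r → IntegrableOn f' (Set.Ioi r) := by
    intro r hr
    refine Integrable.mono' (g := fun s =>
        1 * (f' s ^ 2 * Real.exp (2 * δ * s)) / 2 + (1:ℝ)⁻¹ * Real.exp (-(2 * δ) * s) / 2)
      ?_ (hmeas r hr) ?_
    · exact ((((hBtail r hr).const_mul 1).div_const 2).add
        (((hexpint r).const_mul (1:ℝ)⁻¹).div_const 2))
    · exact Filter.Eventually.of_forall (fun s => by
        simpa using hptwise 1 one_pos s)
  -- tail square integral bound
  have hBmono : ∀ r, R ≤ r →
      (∫ s in Set.Ioi r, f' s ^ 2 * Real.exp (2 * δ * s)) ≤ B := by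
    intro r hr
    apply setIntegral_mono_set hB
    · exact Filter.Eventually.of_forall (fun s => by positivity)
    · exact Filter.Eventually.of_forall (fun s hs => lt_of_le_of_lt hr hs)
  -- integral of |f'| on tails
  have habs : ∀ r, R ≤ r → ∀ ε : ℝ, 0 < ε →
      (∫ s in Set.Ioi r, |f' s|) ≤ ε * B / 2 + ε⁻¹ * (Real.exp (-(2 * δ) * r) / (2 * δ)) / 2 := by
    intro r hr ε hε
    have hint1 : IntegrableOn (fun s => |f' s|) (Set.Ioi r) := (hf'int r hr).abs
    have step1 : (∫ s in Set.Ioi r, |f' s|) ≤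
        ∫ s in Set.Ioi r, (ε * (f' s ^ 2 * Real.exp (2 * δ * s)) / 2
          + ε⁻¹ * Real.exp (-(2 * δ) * s) / 2) := by
      refine setIntegral_mono_on hint1 ?_ measurableSet_Ioi (fun s _ => hptwise ε hε s)
      exact ((((hBtail r hr).const_mul ε).div_const 2).add
        (((hexpint r).const_mul ε⁻¹).div_const 2))
    have step2 : (∫ s in Set.Ioi r, (ε * (f' s ^ 2 * Real.exp (2 * δ * s)) / 2
          + ε⁻¹ * Real.exp (-(2 * δ) * s) / 2))
        = ε * (∫ s in Set.Ioi r, f' s ^ 2 * Real.exp (2 * δ * s)) / 2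
          + ε⁻¹ * (∫ s in Set.Ioi r, Real.exp (-(2 * δ) * s)) / 2 := by
      rw [integral_add ((((hBtail r hr).const_mul ε).div_const 2))
        ((((hexpint r).const_mul ε⁻¹).div_const 2))]
      rw [integral_div, integral_div, integral_const_mul, integral_const_mul]
    have step3 : (∫ s in Set.Ioi r, Real.exp (-(2 * δ) * s))
        = Real.exp (-(2 * δ) * r) / (2 * δ) := exp_int_Ioi h2δ r
    rw [step2, step3] at step1
    have := hBmono r hr
    nlinarith [this, hε, Real.exp_pos (-(2*δ)*r)]
  -- the limit exists
  have hderivIoi : ∀ x ∈ Set.Ioi R, HasDerivAt f (f' x) x :=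
    fun x hx => hderiv x (Set.mem_Ici.2 (le_of_lt hx))
  set finf := limUnder atTop f with hfinf
  have htendsto : Tendsto f atTop (nhds finf) :=
    tendsto_limUnder_of_hasDerivAt_of_integrableOn_Ioi hderivIoi (hf'int R le_rfl)
  refine ⟨finf, htendsto, ?_⟩
  -- key tail estimate
  have hkey : ∀ r, R ≤ r → (finf - f r) ^ 2 ≤ B * (Real.exp (-(2 * δ) * r) / (2 * δ)) := by
    intro r hr
    have hIr : (∫ s in Set.Ioi r, f' s) = finf - f r :=
      integral_Ioi_of_hasDerivAt_of_tendsto'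
        (fun x hx => hderiv x (Set.mem_Ici.2 (le_trans hr hx))) (hf'int r hr) htendsto
    have hle : |finf - f r| ≤ ∫ s in Set.Ioi r, |f' s| := by
      rw [← hIr]
      simpa [Real.norm_eq_abs] using
        norm_integral_le_integral_norm (μ := volume.restrict (Set.Ioi r)) f'
    have := key_amgm (I := |finf - f r|) (b := B)
        (c := Real.exp (-(2 * δ) * r) / (2 * δ)) (abs_nonneg _) hB0 (by positivity)
        (fun ε hε => le_trans hle (habs r hr ε hε))
    rwa [sq_abs] at this
  -- assemble on the unit interval (R, R+1]
  have hfcont : ContinuousOn f (Set.Ici R) :=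
    fun x hx => (hderiv x hx).continuousAt.continuousWithinAt
  have hIcc : Set.Icc R (R + 1) ⊆ Set.Ici R := Set.Icc_subset_Ici_self
  have hfint : IntegrableOn (fun r => f r ^ 2) (Set.Ioc R (R + 1)) :=
    (((hfcont.mono hIcc).pow 2).integrableOn_Icc).mono_set Set.Ioc_subset_Icc_self
  have hgint : IntegrableOn (fun r => (finf - f r) ^ 2) (Set.Ioc R (R + 1)) :=
    (((continuousOn_const.sub (hfcont.mono hIcc)).pow 2).integrableOn_Icc).mono_set
      Set.Ioc_subset_Icc_self
  have hvol : (volume (Set.Ioc R (R + 1))).toReal = 1 := by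
    rw [Real.volume_Ioc]; norm_num
  have hconst : (∫ _r in Set.Ioc R (R + 1), finf ^ 2) = finf ^ 2 := by
    rw [setIntegral_const, measureReal_def, hvol, one_smul]
  have hconstint : ∀ c : ℝ, IntegrableOn (fun _ => c) (Set.Ioc R (R + 1)) :=
    fun c => integrableOn_const measure_Ioc_lt_top.ne
  have step1 : finf ^ 2 ≤ ∫ r in Set.Ioc R (R + 1), (2 * f r ^ 2 + 2 * (finf - f r) ^ 2) := by
    rw [← hconst]
    refine setIntegral_mono_on (hconstint _) ((hfint.const_mul 2).add (hgint.const_mul 2))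
      measurableSet_Ioc (fun r _ => ?_)
    nlinarith [sq_nonneg (f r - (finf - f r))]
  have step2 : (∫ r in Set.Ioc R (R + 1), (2 * f r ^ 2 + 2 * (finf - f r) ^ 2))
      = 2 * (∫ r in Set.Ioc R (R + 1), f r ^ 2)
        + 2 * (∫ r in Set.Ioc R (R + 1), (finf - f r) ^ 2) := by
    rw [integral_add (hfint.const_mul 2) (hgint.const_mul 2), integral_const_mul,
      integral_const_mul]
  -- bound the first integral
  have hAe : IntegrableOn (fun r => f r ^ 2 * Real.exp (2 * (δ - 1) * r))
      (Set.Ioc R (R + 1)) := hA.mono_set Set.Ioc_subset_Ioi_self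
  have stepA : (∫ r in Set.Ioc R (R + 1), f r ^ 2)
      ≤ Real.exp (2 * (1 - δ)) * (Real.exp (2 * (1 - δ) * R) * A) := by
    have h1 : (∫ r in Set.Ioc R (R + 1), f r ^ 2)
        ≤ ∫ r in Set.Ioc R (R + 1),
            (f r ^ 2 * Real.exp (2 * (δ - 1) * r)) * Real.exp (2 * (1 - δ) * (R + 1)) := by
      refine setIntegral_mono_on hfint (hAe.mul_const _) measurableSet_Ioc (fun r hr => ?_)
      have he : (1 : ℝ) ≤ Real.exp (2 * (δ - 1) * r + 2 * (1 - δ) * (R + 1)) :=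
        Real.one_le_exp (by nlinarith [hr.2])
      calc f r ^ 2 = f r ^ 2 * 1 := by ring
        _ ≤ f r ^ 2 * Real.exp (2 * (δ - 1) * r + 2 * (1 - δ) * (R + 1)) :=
          mul_le_mul_of_nonneg_left he (sq_nonneg _)
        _ = (f r ^ 2 * Real.exp (2 * (δ - 1) * r)) * Real.exp (2 * (1 - δ) * (R + 1)) := by
          rw [Real.exp_add]; ring
    have h2 : (∫ r in Set.Ioc R (R + 1),
          (f r ^ 2 * Real.exp (2 * (δ - 1) * r)) * Real.exp (2 * (1 - δ) * (R + 1)))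
        = (∫ r in Set.Ioc R (R + 1), f r ^ 2 * Real.exp (2 * (δ - 1) * r))
            * Real.exp (2 * (1 - δ) * (R + 1)) := integral_mul_const _ _
    have h3 : (∫ r in Set.Ioc R (R + 1), f r ^ 2 * Real.exp (2 * (δ - 1) * r)) ≤ A := by
      refine setIntegral_mono_set hA (Filter.Eventually.of_forall (fun s => by positivity))
        (Filter.Eventually.of_forall (fun s hs => hs.1))
    have h4 : (0 : ℝ) < Real.exp (2 * (1 - δ) * (R + 1)) := Real.exp_pos _
    have h5 : Real.exp (2 * (1 - δ) * (R + 1))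
        = Real.exp (2 * (1 - δ)) * Real.exp (2 * (1 - δ) * R) := by
      rw [← Real.exp_add]; ring_nf
    calc (∫ r in Set.Ioc R (R + 1), f r ^ 2)
        ≤ (∫ r in Set.Ioc R (R + 1), f r ^ 2 * Real.exp (2 * (δ - 1) * r))
            * Real.exp (2 * (1 - δ) * (R + 1)) := by rw [← h2]; exact h1
      _ ≤ A * Real.exp (2 * (1 - δ) * (R + 1)) := by
          exact mul_le_mul_of_nonneg_right h3 h4.le
      _ = Real.exp (2 * (1 - δ)) * (Real.exp (2 * (1 - δ) * R) * A) := by rw [h5]; ring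
  -- bound the second integral
  have stepB : (∫ r in Set.Ioc R (R + 1), (finf - f r) ^ 2)
      ≤ B * (Real.exp (-(2 * δ) * R) / (2 * δ)) := by
    have h1 : (∫ r in Set.Ioc R (R + 1), (finf - f r) ^ 2)
        ≤ ∫ _r in Set.Ioc R (R + 1), B * (Real.exp (-(2 * δ) * R) / (2 * δ)) := by
      refine setIntegral_mono_on hgint (hconstint _) measurableSet_Ioc (fun r hr => ?_)
      refine le_trans (hkey r hr.1.le) ?_
      have he : Real.exp (-(2 * δ) * r) ≤ Real.exp (-(2 * δ) * R) :=
        Real.exp_le_exp.2 (by nlinarith [hr.1])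
      have : Real.exp (-(2 * δ) * r) / (2 * δ) ≤ Real.exp (-(2 * δ) * R) / (2 * δ) := by
        gcongr
      exact mul_le_mul_of_nonneg_left this hB0
    rwa [setIntegral_const, measureReal_def, hvol, one_smul] at h1
  -- final arithmetic
  have hX : (0 : ℝ) ≤ Real.exp (2 * (1 - δ) * R) * A := by positivity
  have hY : (0 : ℝ) ≤ Real.exp (-2 * δ * R) * B := by positivity
  have hE : Real.exp (2 * (1 - δ)) ≤ Real.exp 2 := Real.exp_le_exp.2 (by nlinarith)
  have heq : Real.exp (-(2 * δ) * R) = Real.exp (-2 * δ * R) := by norm_num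
  have h2B : 2 * (B * (Real.exp (-(2 * δ) * R) / (2 * δ)))
      = (1 / δ) * (Real.exp (-2 * δ * R) * B) := by
    rw [heq]; field_simp
  have hfinal : finf ^ 2 ≤ 2 * (Real.exp (2 * (1 - δ)) * (Real.exp (2 * (1 - δ) * R) * A))
      + (1 / δ) * (Real.exp (-2 * δ * R) * B) := by
    rw [← h2B]
    calc finf ^ 2 ≤ _ := step1
      _ = _ := step2
      _ ≤ _ := by
        have := mul_le_mul_of_nonneg_left stepA (by norm_num : (0:ℝ) ≤ 2)
        have := mul_le_mul_of_nonneg_left stepB (by norm_num : (0:ℝ) ≤ 2)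
        linarith [mul_le_mul_of_nonneg_left stepA (by norm_num : (0:ℝ) ≤ 2),
          mul_le_mul_of_nonneg_left stepB (by norm_num : (0:ℝ) ≤ 2)]
  have hc1 : 2 * Real.exp (2 * (1 - δ)) ≤ 2 * Real.exp 2 := by linarith
  have hδinv : (0 : ℝ) < 1 / δ := by positivity
  nlinarith [hfinal, hX, hY, hc1, Real.exp_pos (2 : ℝ), Real.exp_pos (2 * (1 - δ)), hδinv]
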